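/- Under the hypotheses of the inexact Newton theorem (as above), if additionally ‖r_k‖ → 0 as k → ∞, then the inexact Newton sequence x_k converges to the unique zero x* of f in B̄(x₀, t*). -/

import Mathlib

open Set

theorem taylor_aux {X : Type*} [NormedAddCommGroup X] [NormedSpace ℝ X] [CompleteSpace X]
    {s : Set X} (hs : Convex ℝ s) {F : X → X} {A : X → X →L[ℝ] X}
    (hF : ∀ z ∈ s, HasFDerivAt F (A z) z) {K : ℝ} (hK : 0 ≤ K)
    (hA : ∀ p ∈ s, ∀ q ∈ s, ‖A p - A q‖ ≤ K * ‖p - q‖)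
    {u v : X} (hu : u ∈ s) (hv : v ∈ s) :
    ‖F v - F u - A u (v - u)‖ ≤ K / 2 * ‖v - u‖ ^ 2 := by
  set γ : ℝ → X := fun τ => u + τ • (v - u) with hγdef
  have hγmem : ∀ τ ∈ Set.Icc (0:ℝ) 1, γ τ ∈ s := fun τ hτ =>
    hs.add_smul_sub_mem hu hv hτ
  have hγcont : Continuous γ := by
    exact continuous_const.add (continuous_id.smul continuous_const)
  have huIcc : Set.uIcc (0:ℝ) 1 = Set.Icc (0:ℝ) 1 := Set.uIcc_of_le zero_le_one
  have hds : ∀ τ ∈ Set.uIcc (0:ℝ) 1,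
      HasDerivAt (fun σ => F (γ σ) - σ • (A u (v - u)))
        ((A (γ τ)) (v - u) - A u (v - u)) τ := by
    intro τ hτ
    rw [huIcc] at hτ
    have hγ' : HasDerivAt γ (v - u) τ := by
      have h1 : HasDerivAt (fun σ : ℝ => σ • (v - u)) ((1:ℝ) • (v - u)) τ :=
        (hasDerivAt_id τ).smul_const (v - u)
      rw [one_smul] at h1
      exact h1.const_add u
    have hFd : HasFDerivAt F (A (γ τ)) (γ τ) := hF (γ τ) (hγmem τ hτ)
    have h2 : HasDerivAt (fun σ => F (γ σ)) ((A (γ τ)) (v - u)) τ :=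
      hFd.comp_hasDerivAt τ hγ'
    have h3 : HasDerivAt (fun σ : ℝ => σ • (A u (v - u))) ((1:ℝ) • (A u (v - u))) τ :=
      (hasDerivAt_id τ).smul_const (A u (v - u))
    rw [one_smul] at h3
    exact h2.sub h3
  have hAcont : ContinuousOn A s := by
    have hlip : LipschitzOnWith (Real.toNNReal K) A s := by
      rw [lipschitzOnWith_iff_dist_le_mul]
      intro p hp q hq
      rw [dist_eq_norm, dist_eq_norm]
      calc ‖A p - A q‖ ≤ K * ‖p - q‖ := hA p hp q hq
        _ = (Real.toNNReal K : ℝ) * ‖p - q‖ := by rw [Real.coe_toNNReal K hK]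
    exact hlip.continuousOn
  have hcont : ContinuousOn (fun τ => (A (γ τ)) (v - u) - A u (v - u))
      (Set.uIcc (0:ℝ) 1) := by
    rw [huIcc]
    have h1 : ContinuousOn (fun τ => A (γ τ)) (Set.Icc (0:ℝ) 1) :=
      hAcont.comp hγcont.continuousOn hγmem
    have h2 : ContinuousOn (fun τ => (A (γ τ)) (v - u)) (Set.Icc (0:ℝ) 1) :=
      (ContinuousLinearMap.apply ℝ X (v - u)).continuous.comp_continuousOn h1
    exact h2.sub continuousOn_const
  have hFTC := intervalIntegral.integral_eq_sub_of_hasDerivAt hds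
    (hcont.intervalIntegrable)
  have heq : F v - F u - A u (v - u)
      = ∫ τ in (0:ℝ)..1, ((A (γ τ)) (v - u) - A u (v - u)) := by
    rw [hFTC]
    have hγ1 : γ 1 = v := by simp [hγdef]
    have hγ0 : γ 0 = u := by simp [hγdef]
    rw [hγ1, hγ0, one_smul, zero_smul]
    abel
  rw [heq]
  have hbound : ∀ᵐ τ ∂MeasureTheory.volume.restrict (Set.uIoc (0:ℝ) 1),
      ‖(A (γ τ)) (v - u) - A u (v - u)‖ ≤ K * ‖v - u‖ ^ 2 * τ := by
    rw [Set.uIoc_of_le zero_le_one]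
    filter_upwards [MeasureTheory.ae_restrict_mem measurableSet_Ioc] with τ hτ
    have hτ' : τ ∈ Set.Icc (0:ℝ) 1 := ⟨hτ.1.le, hτ.2⟩
    have h1 : ‖(A (γ τ)) (v - u) - A u (v - u)‖ = ‖(A (γ τ) - A u) (v - u)‖ := by
      rw [ContinuousLinearMap.sub_apply]
    rw [h1]
    calc ‖(A (γ τ) - A u) (v - u)‖ ≤ ‖A (γ τ) - A u‖ * ‖v - u‖ :=
          (A (γ τ) - A u).le_opNorm (v - u)
      _ ≤ (K * ‖γ τ - u‖) * ‖v - u‖ := by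
          apply mul_le_mul_of_nonneg_right _ (norm_nonneg _)
          exact hA (γ τ) (hγmem τ hτ') u hu
      _ = K * ‖v - u‖ ^ 2 * τ := by
          have : γ τ - u = τ • (v - u) := by simp [hγdef]
          rw [this, norm_smul, Real.norm_eq_abs, abs_of_nonneg hτ'.1]
          ring
  have hgint : IntervalIntegrable (fun τ => K * ‖v - u‖ ^ 2 * τ)
      MeasureTheory.volume 0 1 := by
    apply Continuous.intervalIntegrable
    exact continuous_const.mul continuous_id
  calc ‖∫ τ in (0:ℝ)..1, ((A (γ τ)) (v - u) - A u (v - u))‖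
      ≤ |∫ τ in (0:ℝ)..1, K * ‖v - u‖ ^ 2 * τ| :=
        intervalIntegral.norm_integral_le_abs_of_norm_le hbound hgint
    _ = K / 2 * ‖v - u‖ ^ 2 := by
        rw [intervalIntegral.integral_const_mul, integral_id]
        rw [abs_of_nonneg (by positivity)]
        ring


open Set Filter Metric

set_option maxHeartbeats 1000000 in
theorem stmt_12
    {X Y : Type*} [NormedAddCommGroup X] [NormedSpace ℝ X] [CompleteSpace X]
    [NormedAddCommGroup Y] [NormedSpace ℝ Y] [CompleteSpace Y]
    (U : Set X) (hU : IsOpen U) (f : X → Y) (f' : X → (X →L[ℝ] Y))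
    (hf : ∀ x ∈ U, HasFDerivAt f (f' x) x)
    (x₀ : X) (hx₀ : x₀ ∈ U) (R : ℝ) (hR : 0 < R)
    (hball : Metric.closedBall x₀ R ⊆ U)
    (e₀ : X ≃L[ℝ] Y) (he₀ : (e₀ : X →L[ℝ] Y) = f' x₀)
    (η K d : ℝ) (hη : 0 ≤ η) (hK : 0 < K) (hd : 0 < d) (hKd : K * d ≤ 1)
    (hη₀ : ‖e₀.symm (f x₀)‖ ≤ η)
    (hLip : ∀ x ∈ Metric.closedBall x₀ R, ∀ y ∈ Metric.closedBall x₀ R,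
      ‖(e₀.symm : Y →L[ℝ] X).comp (f' x - f' y)‖ ≤ K * ‖x - y‖)
    (t : ℝ)
    (hroot : (η + d) - (1 + K * d) * t + 3 * K / 2 * t ^ 2 = 0)
    (hsmallest : ∀ s : ℝ, (η + d) - (1 + K * d) * s + 3 * K / 2 * s ^ 2 = 0 → t ≤ s)
    (htR : t ≤ R)
    (xstar : X) (hxstar : xstar ∈ Metric.closedBall x₀ t ∧ f xstar = 0)
    (x rs : ℕ → X) (hx0 : x 0 = x₀) (hrs : ∀ k, ‖rs k‖ ≤ d)
    (hrec : ∀ k, ∀ ek : X ≃L[ℝ] Y, (ek : X →L[ℝ] Y) = f' (x k) →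
      x (k + 1) = x k - ek.symm (f (x k)) + rs k)
    (hr0 : Filter.Tendsto (fun k => ‖rs k‖) Filter.atTop (nhds 0)) :
    Filter.Tendsto x Filter.atTop (nhds xstar) := by
  rcases subsingleton_or_nontrivial X with hXs | hXn
  · have hxx : x = fun _ => xstar := funext fun k => Subsingleton.elim _ _
    rw [hxx]; exact tendsto_const_nhds
  -- scalar preliminaries
  have ht0 : 0 < t := by
    by_contra h
    push_neg at h
    have h1 : K * d * t ≤ 0 := mul_nonpos_of_nonneg_of_nonpos (mul_nonneg hK.le hd.le) h
    have h2 : 0 ≤ K * t ^ 2 := mul_nonneg hK.le (sq_nonneg t)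
    nlinarith [hroot]
  have hdisc : (1 + K*d - 3*K*t)^2 = (1 + K*d)^2 - 6*K*(η + d) := by
    linear_combination 6*K*hroot
  have hKd3 : K * d ≤ 2 - Real.sqrt 3 := by
    have h6 : 6*(K*d) ≤ (1 + K*d)^2 := by
      nlinarith [sq_nonneg (1 + K*d - 3*K*t), mul_nonneg hK.le hη]
    have h8 : 3 ≤ (2 - K*d)^2 := by nlinarith [h6]
    have h9 := Real.sqrt_le_sqrt h8
    rw [Real.sqrt_sq (by linarith : (0:ℝ) ≤ 2 - K*d)] at h9
    linarith
  have h3Kt : 3*K*t ≤ 1 + K*d := by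
    have heq2 : (η + d) - (1 + K * d) * (2*(1 + K*d)/(3*K) - t)
        + 3 * K / 2 * (2*(1 + K*d)/(3*K) - t) ^ 2 = 0 := by
      have hKne : K ≠ 0 := ne_of_gt hK
      have h0 : (η + d) - (1 + K * d) * (2*(1 + K*d)/(3*K) - t)
          + 3 * K / 2 * (2*(1 + K*d)/(3*K) - t) ^ 2
          = (η + d) - (1 + K * d) * t + 3 * K / 2 * t ^ 2 := by
        field_simp
        ring
      rw [h0]
      exact hroot
    have h2 : t ≤ 2*(1 + K*d)/(3*K) - t := hsmallest _ heq2
    have h3 : 2*t ≤ 2*(1 + K*d)/(3*K) := by linarith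
    rw [le_div_iff₀ (by positivity)] at h3
    linarith
  have hsq32 : (3:ℝ)/2 < Real.sqrt 3 := by
    rw [show ((3:ℝ)/2) = Real.sqrt ((3/2)^2) by
      rw [Real.sqrt_sq (by norm_num : (0:ℝ) ≤ 3/2)]]
    exact Real.sqrt_lt_sqrt (by positivity) (by norm_num)
  have hKt : K * t < 1/2 := by linarith
  have h1Kt : (0:ℝ) < 1 - K * t := by linarith
  -- geometry
  set F : X → X := fun z => e₀.symm (f z) with hFdef
  set A : X → (X →L[ℝ] X) := fun z => (e₀.symm : Y →L[ℝ] X).comp (f' z) with hAdef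
  have hsubR : Metric.closedBall x₀ t ⊆ Metric.closedBall x₀ R :=
    Metric.closedBall_subset_closedBall htR
  have hstar_t : ‖xstar - x₀‖ ≤ t := by
    rw [← dist_eq_norm]; exact Metric.mem_closedBall.mp hxstar.1
  have hstar_R : xstar ∈ Metric.closedBall x₀ R := hsubR hxstar.1
  have hFstar : F xstar = 0 := by
    simp only [hFdef, hxstar.2, map_zero]
  have hAx₀ : A x₀ = 1 := by
    ext v
    simp only [hAdef, ContinuousLinearMap.comp_apply, ← he₀,
      ContinuousLinearEquiv.coe_coe, ContinuousLinearEquiv.symm_apply_apply,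
      ContinuousLinearMap.one_apply]
  have hALip : ∀ p ∈ Metric.closedBall x₀ R, ∀ q ∈ Metric.closedBall x₀ R,
      ‖A p - A q‖ ≤ K * ‖p - q‖ := by
    intro p hp q hq
    have h1 : A p - A q = (e₀.symm : Y →L[ℝ] X).comp (f' p - f' q) := by
      ext v
      simp [hAdef, ContinuousLinearMap.comp_apply, map_sub]
    rw [h1]; exact hLip p hp q hq
  have hF' : ∀ z ∈ Metric.closedBall x₀ R, HasFDerivAt F (A z) z := by
    intro z hz
    exact ((e₀.symm : Y →L[ℝ] X).hasFDerivAt).comp z (hf z (hball hz))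
  have key : ∀ u ∈ Metric.closedBall x₀ R, ∀ v ∈ Metric.closedBall x₀ R,
      ‖F v - F u - (A u) (v - u)‖ ≤ K/2 * ‖v - u‖^2 := fun u hu v hv =>
    taylor_aux (convex_closedBall x₀ R) hF' hK.le hALip hu hv
  set q : ℝ := K * t * (1 - K * t)⁻¹ with hqdef
  have hq0 : 0 ≤ q := mul_nonneg (mul_nonneg hK.le ht0.le) (inv_nonneg.mpr h1Kt.le)
  have hq1 : q < 1 := by
    rw [hqdef, ← div_eq_mul_inv, div_lt_one h1Kt]; linarith
  -- step lemma
  have step : ∀ k, ‖x k - x₀‖ ≤ t →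
      ‖x (k+1) - x₀‖ ≤ t ∧ ‖xstar - x (k+1)‖ ≤ q * ‖xstar - x k‖ + ‖rs k‖ := by
    intro k hz
    set z := x k with hzdef
    have hzballt : z ∈ Metric.closedBall x₀ t := by
      rw [Metric.mem_closedBall, dist_eq_norm]; exact hz
    have hzR : z ∈ Metric.closedBall x₀ R := hsubR hzballt
    have hx₀R : x₀ ∈ Metric.closedBall x₀ R := Metric.mem_closedBall_self hR.le
    have hznorm : ‖1 - A z‖ < 1 := by
      calc ‖1 - A z‖ = ‖A x₀ - A z‖ := by rw [hAx₀]
        _ ≤ K * ‖x₀ - z‖ := hALip x₀ hx₀R z hzR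
        _ = K * ‖z - x₀‖ := by rw [norm_sub_rev]
        _ ≤ K * t := mul_le_mul_of_nonneg_left hz hK.le
        _ < 1 := by linarith
    set Uz : (X →L[ℝ] X)ˣ := Units.oneSub (1 - A z) hznorm with hUzdef
    have hUval : (Uz : X →L[ℝ] X) = A z := by
      rw [hUzdef, Units.val_oneSub, sub_sub_cancel]
    set V : X →L[ℝ] X := ((Uz⁻¹ : (X →L[ℝ] X)ˣ) : X →L[ℝ] X) with hVdef
    have hVnorm : ‖V‖ ≤ (1 - K * t)⁻¹ := by
      have h1 : ‖V‖ = ‖∑' n : ℕ, (1 - A z)^n‖ := rfl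
      rw [h1]
      have h2 := tsum_geometric_le_of_norm_lt_one (1 - A z) hznorm
      rw [norm_one] at h2
      have h3 : (1 - ‖1 - A z‖)⁻¹ ≤ (1 - K*t)⁻¹ := by
        apply inv_anti₀ h1Kt
        have : ‖1 - A z‖ ≤ K * t := by
          calc ‖1 - A z‖ = ‖A x₀ - A z‖ := by rw [hAx₀]
            _ ≤ K * ‖x₀ - z‖ := hALip x₀ hx₀R z hzR
            _ = K * ‖z - x₀‖ := by rw [norm_sub_rev]
            _ ≤ K * t := mul_le_mul_of_nonneg_left hz hK.le
        linarith
      linarith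
    have hVA : ∀ w, V ((A z) w) = w := by
      intro w
      have h1 : V * (Uz : X →L[ℝ] X) = 1 := Units.inv_mul Uz
      calc V ((A z) w) = V ((Uz : X →L[ℝ] X) w) := by rw [hUval]
        _ = (V * (Uz : X →L[ℝ] X)) w := rfl
        _ = w := by rw [h1]; rfl
    -- the continuous linear equiv corresponding to f' z
    set Ez : X ≃L[ℝ] X := ContinuousLinearEquiv.unitsEquiv ℝ X Uz with hEzdef
    set ek : X ≃L[ℝ] Y := Ez.trans e₀ with hekdef
    have hekcoe : (ek : X →L[ℝ] Y) = f' z := by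
      ext v
      simp only [ContinuousLinearEquiv.coe_coe, hekdef, ContinuousLinearEquiv.trans_apply]
      rw [show Ez v = (Uz : X →L[ℝ] X) v from
        ContinuousLinearEquiv.unitsEquiv_apply ℝ X Uz v, hUval]
      simp only [hAdef, ContinuousLinearMap.comp_apply, ContinuousLinearEquiv.coe_coe,
        ContinuousLinearEquiv.apply_symm_apply]
    have hEzsymm : ∀ w, Ez.symm w = V w := by
      intro w
      rw [ContinuousLinearEquiv.symm_apply_eq]
      have h2 : Ez (V w) = (Uz : X →L[ℝ] X) (V w) :=
        ContinuousLinearEquiv.unitsEquiv_apply ℝ X Uz (V w)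
      rw [h2]
      symm
      have h3 : (Uz : X →L[ℝ] X) * V = 1 := Units.mul_inv Uz
      calc (Uz : X →L[ℝ] X) (V w) = ((Uz : X →L[ℝ] X) * V) w := rfl
        _ = w := by rw [h3]; rfl
    have heq : x (k+1) = z - V (F z) + rs k := by
      have h0 : ek.symm (f z) = V (F z) := by
        calc ek.symm (f z) = Ez.symm (e₀.symm (f z)) :=
              ContinuousLinearEquiv.symm_trans_apply e₀ Ez (f z)
          _ = V (F z) := hEzsymm _
      rw [hrec k ek hekcoe, h0]
    constructor
    · -- containment
      have h1 : x (k+1) - x₀ = (V ((A z) (z - x₀) - F z)) + rs k := by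
        rw [heq, map_sub, hVA]
        abel
      have h2 : (A z) (z - x₀) - F z = (F x₀ - F z - (A z) (x₀ - z)) - F x₀ := by
        rw [map_sub, map_sub]
        abel
      have h3 : ‖(A z) (z - x₀) - F z‖ ≤ K/2 * t^2 + η := by
        rw [h2]
        calc ‖(F x₀ - F z - (A z) (x₀ - z)) - F x₀‖
            ≤ ‖F x₀ - F z - (A z) (x₀ - z)‖ + ‖F x₀‖ := norm_sub_le _ _
          _ ≤ K/2 * ‖x₀ - z‖^2 + η := by
              have := key z hzR x₀ hx₀R
              have hFx₀ : ‖F x₀‖ ≤ η := hη₀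
              linarith
          _ ≤ K/2 * t^2 + η := by
              have h4 : ‖x₀ - z‖ ≤ t := by rw [norm_sub_rev]; exact hz
              have h5 : ‖x₀ - z‖^2 ≤ t^2 := by nlinarith [norm_nonneg (x₀ - z)]
              nlinarith
      have h6 : ‖x (k+1) - x₀‖ ≤ (1 - K*t)⁻¹ * (K/2 * t^2 + η) + d := by
        rw [h1]
        calc ‖V ((A z) (z - x₀) - F z) + rs k‖
            ≤ ‖V ((A z) (z - x₀) - F z)‖ + ‖rs k‖ := norm_add_le _ _
          _ ≤ ‖V‖ * ‖(A z) (z - x₀) - F z‖ + d := by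
              have := V.le_opNorm ((A z) (z - x₀) - F z)
              have := hrs k
              linarith
          _ ≤ (1 - K*t)⁻¹ * (K/2 * t^2 + η) + d := by
              have h7 : (0:ℝ) ≤ K/2 * t^2 + η := by positivity
              have := mul_le_mul hVnorm h3 (norm_nonneg _) (inv_nonneg.mpr h1Kt.le)
              linarith
      have hid : (1 - K*t)⁻¹ * (K/2 * t^2 + η) + d = t := by
        have hne : (1 - K*t) ≠ 0 := ne_of_gt h1Kt
        field_simp
        linear_combination 2*hroot
      linarith [h6, hid.le, hid.ge]
    · -- error contraction
      have h1 : xstar - x (k+1) = -(V (F xstar - F z - (A z) (xstar - z))) - rs k := by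
        rw [heq, hFstar, map_sub, map_sub, hVA, map_zero]
        abel
      have h2 : ‖xstar - z‖ ≤ 2 * t := by
        have h3 : xstar - z = (xstar - x₀) - (z - x₀) := by abel
        rw [h3]
        calc ‖(xstar - x₀) - (z - x₀)‖ ≤ ‖xstar - x₀‖ + ‖z - x₀‖ := norm_sub_le _ _
          _ ≤ 2 * t := by linarith
      have h4 : ‖F xstar - F z - (A z) (xstar - z)‖ ≤ K/2 * ‖xstar - z‖^2 :=
        key z hzR xstar hstar_R
      rw [h1]
      calc ‖-(V (F xstar - F z - (A z) (xstar - z))) - rs k‖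
          ≤ ‖V (F xstar - F z - (A z) (xstar - z))‖ + ‖rs k‖ := by
            have h := norm_sub_le (-(V (F xstar - F z - (A z) (xstar - z)))) (rs k)
            rwa [norm_neg] at h
        _ ≤ (1 - K*t)⁻¹ * (K/2 * ‖xstar - z‖^2) + ‖rs k‖ := by
            have h5 := V.le_opNorm (F xstar - F z - (A z) (xstar - z))
            have h6 := mul_le_mul hVnorm h4 (norm_nonneg _) (inv_nonneg.mpr h1Kt.le)
            linarith
        _ ≤ q * ‖xstar - z‖ + ‖rs k‖ := by
            have hE0 : (0:ℝ) ≤ ‖xstar - z‖ := norm_nonneg _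
            have h7 : K/2 * ‖xstar - z‖^2 ≤ K * t * ‖xstar - z‖ := by
              have h7a : ‖xstar - z‖^2 ≤ 2*t*‖xstar - z‖ := by
                rw [sq]; exact mul_le_mul_of_nonneg_right h2 hE0
              calc K/2 * ‖xstar - z‖^2 ≤ K/2 * (2*t*‖xstar - z‖) :=
                    mul_le_mul_of_nonneg_left h7a (by positivity)
                _ = K * t * ‖xstar - z‖ := by ring
            have h8 := mul_le_mul_of_nonneg_left h7 (inv_nonneg.mpr h1Kt.le)
            have h9 : (1 - K*t)⁻¹ * (K*t*‖xstar - z‖) = q * ‖xstar - z‖ := by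
              rw [hqdef]; ring
            linarith
  -- invariant
  have hmain : ∀ k, ‖x k - x₀‖ ≤ t := by
    intro k
    induction k with
    | zero => rw [hx0]; simp [ht0.le]
    | succ k ih => exact (step k ih).1
  have herr : ∀ k, ‖xstar - x (k+1)‖ ≤ q * ‖xstar - x k‖ + ‖rs k‖ :=
    fun k => (step k (hmain k)).2
  have hbound : ∀ k, ‖xstar - x k‖ ≤ 2 * t := by
    intro k
    have h3 : xstar - x k = (xstar - x₀) - (x k - x₀) := by abel
    rw [h3]
    calc ‖(xstar - x₀) - (x k - x₀)‖ ≤ ‖xstar - x₀‖ + ‖x k - x₀‖ := norm_sub_le _ _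
      _ ≤ 2 * t := by linarith [hmain k]
  -- convergence
  rw [Metric.tendsto_atTop]
  intro ε hε
  have h1q : 0 < 1 - q := by linarith
  obtain ⟨N, hN⟩ := Metric.tendsto_atTop.mp hr0 ((1-q)*ε/2) (by positivity)
  have hrsN : ∀ n, N ≤ n → ‖rs n‖ ≤ (1-q)*ε/2 := by
    intro n hn
    have := hN n hn
    rw [Real.dist_eq, sub_zero, abs_of_nonneg (norm_nonneg _)] at this
    linarith
  have hiter : ∀ m, ‖xstar - x (N + m)‖ ≤ q^m * (2*t) + ε/2 := by
    intro m
    induction m with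
    | zero =>
        simpa using by linarith [hbound N, hε]
    | succ m ih =>
        have e1 : ‖xstar - x (N + m + 1)‖ ≤ q * ‖xstar - x (N + m)‖ + ‖rs (N + m)‖ :=
          herr (N + m)
        have e2 : q * ‖xstar - x (N + m)‖ ≤ q * (q^m * (2*t) + ε/2) :=
          mul_le_mul_of_nonneg_left ih hq0
        have e3 : ‖rs (N + m)‖ ≤ (1-q)*ε/2 := hrsN _ (Nat.le_add_right N m)
        have e4 : q * (q^m * (2*t) + ε/2) + (1-q)*ε/2 = q^(m+1) * (2*t) + ε/2 := by ring
        have : (N + (m+1)) = (N + m) + 1 := rfl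
        rw [this]
        linarith
  obtain ⟨M, hM⟩ : ∃ M, q^M * (2*t) < ε/2 := by
    have hpow : Filter.Tendsto (fun m => q^m * (2*t)) Filter.atTop (nhds 0) := by
      have := (tendsto_pow_atTop_nhds_zero_of_lt_one hq0 hq1).mul_const (2*t)
      rwa [zero_mul] at this
    exact (hpow.eventually (gt_mem_nhds (show (0:ℝ) < ε/2 by positivity))).exists
  refine ⟨N + M, fun n hn => ?_⟩
  obtain ⟨m, rfl, hm⟩ : ∃ m, n = N + m ∧ M ≤ m := ⟨n - N, by omega, by omega⟩
  rw [dist_comm, dist_eq_norm]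
  have h9 : q^m ≤ q^M := pow_le_pow_of_le_one hq0 hq1.le hm
  have h10 : q^m * (2*t) ≤ q^M * (2*t) :=
    mul_le_mul_of_nonneg_right h9 (by linarith)
  calc ‖xstar - x (N + m)‖ ≤ q^m * (2*t) + ε/2 := hiter m
    _ < ε := by linarith
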